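/- arXiv:1311.1460 — 5 statements merged into one kernel-verified Lean document; each statement's English description precedes it below -/
import Mathlib

section
/- Let N, e be coprime positive integers, r a divisor of e, d₁ a divisor of N and d₂ a divisor of e. For any integers (r_δ) indexed by divisors δ of N, one has (Ne/24)·Σ_{δ|N} gcd(d₁d₂, rδ)² r_δ / (gcd(d₁d₂, Ne/(d₁d₂)) · d₁d₂ · rδ) = (e·gcd(d₂², r²)/(r·gcd(d₂², e))) · (N/24)·Σ_{δ|N} gcd(d₁,δ)² r_δ / (gcd(d₁, N/d₁) · d₁ · δ), as an identity of rational numbers. -/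
open Finset

/-- gcd of squares is the square of the gcd. -/
lemma gcd_sq_aux (a b : ℕ) : Nat.gcd (a ^ 2) (b ^ 2) = Nat.gcd a b ^ 2 := by
  rcases Nat.eq_zero_or_pos (Nat.gcd a b) with h | h
  · obtain ⟨rfl, rfl⟩ := Nat.gcd_eq_zero_iff.mp h
    simp
  · have ha : a = Nat.gcd a b * (a / Nat.gcd a b) :=
      (Nat.mul_div_cancel' (Nat.gcd_dvd_left a b)).symm
    have hb : b = Nat.gcd a b * (b / Nat.gcd a b) :=
      (Nat.mul_div_cancel' (Nat.gcd_dvd_right a b)).symm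
    have hcop : Nat.Coprime (a / Nat.gcd a b) (b / Nat.gcd a b) :=
      Nat.coprime_div_gcd_div_gcd h
    calc Nat.gcd (a ^ 2) (b ^ 2)
        = Nat.gcd ((Nat.gcd a b * (a / Nat.gcd a b)) ^ 2)
            ((Nat.gcd a b * (b / Nat.gcd a b)) ^ 2) := by rw [← ha, ← hb]
      _ = Nat.gcd a b ^ 2 * Nat.gcd ((a / Nat.gcd a b) ^ 2) ((b / Nat.gcd a b) ^ 2) := by
          rw [mul_pow, mul_pow, Nat.gcd_mul_left]
      _ = Nat.gcd a b ^ 2 := by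
          have h1 : Nat.gcd ((a / Nat.gcd a b) ^ 2) ((b / Nat.gcd a b) ^ 2) = 1 :=
            hcop.pow 2 2
          rw [h1, mul_one]

/-- Splitting a gcd of products under cross-coprimality. -/
lemma gcd_mul_split (a b c d : ℕ) (hab : Nat.Coprime a b) (hac : Nat.Coprime a c)
    (hbd : Nat.Coprime b d) :
    Nat.gcd (a * b) (c * d) = Nat.gcd a d * Nat.gcd b c := by
  rw [Nat.gcd_comm, Nat.Coprime.gcd_mul _ hab,
    Nat.Coprime.gcd_mul_left_cancel d hac.symm,
    Nat.Coprime.gcd_mul_right_cancel c hbd.symm,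
    Nat.gcd_comm d a, Nat.gcd_comm c b]

/-- The Ligozat order-of-vanishing identity underlying Lemma 5.2 of Rouse–Webb:
for coprime positive integers `N`, `e`, a divisor `r` of `e`, divisors `d₁ ∣ N` and
`d₂ ∣ e`, and any integers `(r_δ)` indexed by the divisors of `N`,
the Ligozat sum of `f | V(r)` at the cusp `1/(d₁d₂)` on `Γ₀(eN)` equals
`(e·gcd(d₂²,r²)/(r·gcd(d₂²,e)))` times the Ligozat sum of `f` at `1/d₁` on `Γ₀(N)`. -/
theorem ligozat_V_operator_identity (N e r d₁ d₂ : ℕ) (hN : 0 < N) (he : 0 < e)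
    (hcop : Nat.Coprime N e) (hr : r ∣ e) (hd₁ : d₁ ∣ N) (hd₂ : d₂ ∣ e)
    (rδ : ℕ → ℤ) :
    ((N * e : ℚ) / 24) * ∑ δ ∈ N.divisors,
        ((Nat.gcd (d₁ * d₂) (r * δ) : ℚ) ^ 2 * (rδ δ : ℚ)) /
          ((Nat.gcd (d₁ * d₂) ((N * e) / (d₁ * d₂)) : ℚ) * (d₁ * d₂ : ℚ) * (r * δ : ℚ))
    = ((e : ℚ) * (Nat.gcd (d₂ ^ 2) (r ^ 2) : ℚ)) / ((r : ℚ) * (Nat.gcd (d₂ ^ 2) e : ℚ)) *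
        (((N : ℚ) / 24) * ∑ δ ∈ N.divisors,
          ((Nat.gcd d₁ δ : ℚ) ^ 2 * (rδ δ : ℚ)) /
            ((Nat.gcd d₁ (N / d₁) : ℚ) * (d₁ : ℚ) * (δ : ℚ))) := by
  have hd₁pos : 0 < d₁ := Nat.pos_of_dvd_of_pos hd₁ hN
  have hd₂pos : 0 < d₂ := Nat.pos_of_dvd_of_pos hd₂ he
  have hrpos : 0 < r := Nat.pos_of_dvd_of_pos hr he
  -- coprimality facts
  have hd₁d₂ : Nat.Coprime d₁ d₂ :=
    Nat.Coprime.coprime_dvd_left hd₁ (hcop.coprime_dvd_right hd₂)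
  have hd₁r : Nat.Coprime d₁ r :=
    Nat.Coprime.coprime_dvd_left hd₁ (hcop.coprime_dvd_right hr)
  have hd₁e' : Nat.Coprime d₁ (e / d₂) :=
    Nat.Coprime.coprime_dvd_left hd₁ (hcop.coprime_dvd_right (Nat.div_dvd_of_dvd hd₂))
  have hd₂N' : Nat.Coprime d₂ (N / d₁) :=
    (Nat.Coprime.coprime_dvd_left (Nat.div_dvd_of_dvd hd₁) (hcop.coprime_dvd_right hd₂)).symm
  -- gcd identities
  have h2 : Nat.gcd (d₁ * d₂) (N * e / (d₁ * d₂))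
      = Nat.gcd d₁ (N / d₁) * Nat.gcd d₂ (e / d₂) := by
    have hdiv : N * e / (d₁ * d₂) = (e / d₂) * (N / d₁) := by
      rw [Nat.div_mul_div_comm hd₂ hd₁, mul_comm e N, mul_comm d₂ d₁]
    rw [hdiv, gcd_mul_split d₁ d₂ (e / d₂) (N / d₁) hd₁d₂ hd₁e' hd₂N']
  have h3 : Nat.gcd (d₂ ^ 2) (r ^ 2) = Nat.gcd d₂ r ^ 2 := gcd_sq_aux d₂ r
  have h4 : Nat.gcd (d₂ ^ 2) e = d₂ * Nat.gcd d₂ (e / d₂) := by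
    conv_lhs => rw [sq, ← Nat.mul_div_cancel' hd₂, Nat.gcd_mul_left]
  rw [h3, h4, Finset.mul_sum, Finset.mul_sum, Finset.mul_sum]
  refine Finset.sum_congr rfl fun δ hδ => ?_
  obtain ⟨hδN, -⟩ := Nat.mem_divisors.mp hδ
  have hδpos : 0 < δ := Nat.pos_of_dvd_of_pos hδN hN
  have hd₂δ : Nat.Coprime d₂ δ :=
    (Nat.Coprime.coprime_dvd_left hδN (hcop.coprime_dvd_right hd₂)).symm
  have h1 : Nat.gcd (d₁ * d₂) (r * δ) = Nat.gcd d₁ δ * Nat.gcd d₂ r :=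
    gcd_mul_split d₁ d₂ r δ hd₁d₂ hd₁r hd₂δ
  rw [h1, h2]
  have hq1 : (d₁ : ℚ) ≠ 0 := Nat.cast_ne_zero.mpr hd₁pos.ne'
  have hq2 : (d₂ : ℚ) ≠ 0 := Nat.cast_ne_zero.mpr hd₂pos.ne'
  have hqr : (r : ℚ) ≠ 0 := Nat.cast_ne_zero.mpr hrpos.ne'
  have hqδ : (δ : ℚ) ≠ 0 := Nat.cast_ne_zero.mpr hδpos.ne'
  have hqA : (Nat.gcd d₁ (N / d₁) : ℚ) ≠ 0 :=
    Nat.cast_ne_zero.mpr (Nat.gcd_pos_of_pos_left _ hd₁pos).ne'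
  have hqD : (Nat.gcd d₂ (e / d₂) : ℚ) ≠ 0 :=
    Nat.cast_ne_zero.mpr (Nat.gcd_pos_of_pos_left _ hd₂pos).ne'
  push_cast
  field_simp
end

section
/- Suppose h(q) = q^r · Π_{d|N} Π_{n≥1} (1 − q^{dn})^{s_d} is a formal power series (times q^r) with all coefficients in ℤ, where r ∈ ℤ, N is a positive integer, and each exponent s_d ∈ ℚ (using the generalized binomial expansion of (1−x)^s for rational s). Then every s_d ∈ ℤ. -/
open Finset PowerSeries

/-- The generalized binomial coefficient `s(s-1)⋯(s-k+1)/k!` for `s : ℚ`. -/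
noncomputable def qChoose (s : ℚ) (k : ℕ) : ℚ :=
  (∏ i ∈ Finset.range k, (s - i)) / (k.factorial : ℚ)

/-- The formal power series `∏_{n ≥ 1} (1 - q^{d n})` over `ℚ`; since the factor
`(1 - q^{dn})` only affects coefficients in degrees `≥ n`, the `k`-th coefficient is
that of the finite product `∏_{n=1}^{k+1} (1 - q^{dn})`. -/
noncomputable def etaSeries (d : ℕ) : PowerSeries ℚ :=
  PowerSeries.mk fun k =>
    PowerSeries.coeff k
      (∏ n ∈ Finset.range (k + 1), (1 - (PowerSeries.X : PowerSeries ℚ) ^ (d * (n + 1))))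

/-- The rational power `f^s = (1 + (f-1))^s = ∑_k binom(s,k) (f-1)^k` of a power series
with constant term `1`; since `f - 1` has positive order, the `k`-th coefficient is a
finite sum. -/
noncomputable def rpowSeries (f : PowerSeries ℚ) (s : ℚ) : PowerSeries ℚ :=
  PowerSeries.mk fun k =>
    ∑ j ∈ Finset.range (k + 1), qChoose s j * PowerSeries.coeff k ((f - 1) ^ j)

namespace RW

/-- The subring of rationals that are integers. -/
def R : Subring ℚ := (Int.castRingHom ℚ).range

lemma mem_R {x : ℚ} : x ∈ R ↔ ∃ m : ℤ, x = (m : ℚ) := by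
  constructor
  · rintro ⟨m, rfl⟩; exact ⟨m, rfl⟩
  · rintro ⟨m, rfl⟩; exact ⟨m, rfl⟩

lemma prod_cast_asc (a : ℕ) (k : ℕ) :
    ∏ i ∈ Finset.range k, ((a : ℤ) + i) = (a.ascFactorial k : ℤ) := by
  induction k with
  | zero => simp
  | succ k ih =>
    rw [Finset.prod_range_succ, ih, Nat.ascFactorial_succ]
    push_cast
    ring

lemma factorial_dvd_prod (m : ℤ) (k : ℕ) :
    (k.factorial : ℤ) ∣ ∏ i ∈ Finset.range k, (m - i) := by
  rcases le_or_gt 0 m with hm | hm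
  · lift m to ℕ using hm
    rcases lt_or_ge m k with h | h
    · rw [Finset.prod_eq_zero (Finset.mem_range.mpr h) (by simp)]
      exact dvd_zero _
    · have key : ∏ i ∈ Finset.range k, ((m : ℤ) - i) = (m.descFactorial k : ℤ) := by
        rw [Nat.descFactorial_eq_prod_range, Nat.cast_prod]
        refine Finset.prod_congr rfl fun i hi => ?_
        have hi' : i ≤ m := le_trans (le_of_lt (Finset.mem_range.mp hi)) h
        rw [Nat.cast_sub hi']
      rw [key]
      exact_mod_cast Int.natCast_dvd_natCast.mpr (Nat.factorial_dvd_descFactorial m k)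
  · have h1 : ∏ i ∈ Finset.range k, (m - i) =
        (-1) ^ k * ∏ i ∈ Finset.range k, ((-m) + i) := by
      have h0 : ∏ i ∈ Finset.range k, (m - (i : ℤ)) =
          ∏ i ∈ Finset.range k, ((-1) * ((-m) + i)) :=
        Finset.prod_congr rfl fun i _ => by ring
      rw [h0, Finset.prod_mul_distrib, Finset.prod_const, Finset.card_range]
    set a := (-m).toNat with ha
    have ha' : (a : ℤ) = -m := Int.toNat_of_nonneg (by omega)
    rw [h1]
    have h2 : ∏ i ∈ Finset.range k, ((-m) + i) = (a.ascFactorial k : ℤ) := by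
      rw [← ha']; exact prod_cast_asc a k
    rw [h2]
    exact Dvd.dvd.mul_left
      (Int.natCast_dvd_natCast.mpr (Nat.factorial_dvd_ascFactorial a k)) _

lemma qChoose_mem (m : ℤ) (k : ℕ) : qChoose (m : ℚ) k ∈ R := by
  obtain ⟨z, hz⟩ := factorial_dvd_prod m k
  rw [mem_R]
  refine ⟨z, ?_⟩
  have h1 : (∏ i ∈ Finset.range k, ((m : ℚ) - i)) =
      ((∏ i ∈ Finset.range k, (m - i) : ℤ) : ℚ) := by
    push_cast; ring
  have hk : (k.factorial : ℚ) ≠ 0 := by exact_mod_cast k.factorial_ne_zero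
  rw [qChoose, h1, hz]
  push_cast
  field_simp

/-- Power series all of whose coefficients are integers. -/
def IntCoeffs (f : PowerSeries ℚ) : Prop := ∀ k, PowerSeries.coeff k f ∈ R

lemma IntCoeffs.one : IntCoeffs 1 := by
  intro k
  rw [PowerSeries.coeff_one]
  split
  exacts [one_mem R, zero_mem R]

lemma IntCoeffs.mul {f g : PowerSeries ℚ} (hf : IntCoeffs f) (hg : IntCoeffs g) :
    IntCoeffs (f * g) := by
  intro k
  rw [PowerSeries.coeff_mul]
  exact Subring.sum_mem _ fun p _ => mul_mem (hf p.1) (hg p.2)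

lemma IntCoeffs.sub {f g : PowerSeries ℚ} (hf : IntCoeffs f) (hg : IntCoeffs g) :
    IntCoeffs (f - g) := by
  intro k
  rw [map_sub]
  exact sub_mem (hf k) (hg k)

lemma IntCoeffs.pow {f : PowerSeries ℚ} (hf : IntCoeffs f) (n : ℕ) : IntCoeffs (f ^ n) := by
  induction n with
  | zero => simpa using IntCoeffs.one
  | succ n ih => rw [pow_succ]; exact ih.mul hf

lemma IntCoeffs.prod {ι : Type*} (T : Finset ι) (F : ι → PowerSeries ℚ)
    (h : ∀ e ∈ T, IntCoeffs (F e)) : IntCoeffs (∏ e ∈ T, F e) :=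
  Finset.prod_induction F IntCoeffs (fun _ _ => IntCoeffs.mul) IntCoeffs.one h

lemma IntCoeffs.X_pow (n : ℕ) : IntCoeffs ((PowerSeries.X : PowerSeries ℚ) ^ n) := by
  intro k
  rw [PowerSeries.coeff_X_pow]
  split
  exacts [one_mem R, zero_mem R]

lemma etaSeries_intCoeffs (d : ℕ) : IntCoeffs (etaSeries d) := by
  intro k
  rw [etaSeries, PowerSeries.coeff_mk]
  exact IntCoeffs.prod _ _ (fun n _ => IntCoeffs.one.sub (IntCoeffs.X_pow _)) k

lemma rpow_intCoeffs (f : PowerSeries ℚ) (hf : IntCoeffs f) (m : ℤ) :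
    IntCoeffs (rpowSeries f (m : ℚ)) := by
  intro k
  rw [rpowSeries, PowerSeries.coeff_mk]
  exact Subring.sum_mem _ fun j _ =>
    mul_mem (qChoose_mem m j) ((hf.sub IntCoeffs.one).pow j k)

lemma dvd_sub_one_prod {ι : Type*} (T : Finset ι) (F : ι → PowerSeries ℚ) (n : ℕ)
    (h : ∀ e ∈ T, (PowerSeries.X : PowerSeries ℚ) ^ n ∣ (F e - 1)) :
    (PowerSeries.X : PowerSeries ℚ) ^ n ∣ (∏ e ∈ T, F e - 1) := by
  classical
  induction T using Finset.induction with
  | empty => simp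
  | @insert a T ha ih =>
    rw [Finset.prod_insert ha]
    have key : F a * ∏ e ∈ T, F e - 1 = F a * (∏ e ∈ T, F e - 1) + (F a - 1) := by ring
    rw [key]
    exact dvd_add (Dvd.dvd.mul_left (ih fun e he => h e (Finset.mem_insert_of_mem he)) _)
      (h a (Finset.mem_insert_self a T))

lemma coeff_mul_of_dvd (f g : PowerSeries ℚ) (n : ℕ)
    (hg : (PowerSeries.X : PowerSeries ℚ) ^ (n + 1) ∣ (g - 1)) :
    PowerSeries.coeff n (f * g) = PowerSeries.coeff n f := by
  have key : f * g = f + f * (g - 1) := by ring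
  rw [key, map_add]
  have h0 : PowerSeries.coeff n (f * (g - 1)) = 0 :=
    PowerSeries.X_pow_dvd_iff.mp (Dvd.dvd.mul_left hg f) n (lt_add_one n)
  rw [h0, add_zero]

lemma eta_sub_one_dvd (d : ℕ) (hd : 0 < d) :
    (PowerSeries.X : PowerSeries ℚ) ^ d ∣ (etaSeries d - 1) := by
  rw [PowerSeries.X_pow_dvd_iff]
  intro m hm
  have hdvd : (PowerSeries.X : PowerSeries ℚ) ^ (m + 1) ∣
      ((∏ n ∈ Finset.range (m + 1),
        (1 - (PowerSeries.X : PowerSeries ℚ) ^ (d * (n + 1)))) - 1) := by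
    refine dvd_sub_one_prod _ _ _ fun n _ => ?_
    have h1 : (1 : PowerSeries ℚ) - PowerSeries.X ^ (d * (n + 1)) - 1 =
        -(PowerSeries.X ^ (d * (n + 1))) := by ring
    rw [h1]
    exact dvd_neg.mpr (pow_dvd_pow _ (by nlinarith))
  have h2 := PowerSeries.X_pow_dvd_iff.mp hdvd m (lt_add_one m)
  rw [map_sub] at h2 ⊢
  rw [etaSeries, PowerSeries.coeff_mk]
  exact h2

lemma coeff_eta_self (d : ℕ) (hd : 0 < d) :
    PowerSeries.coeff d (etaSeries d) = -1 := by
  rw [etaSeries, PowerSeries.coeff_mk, Finset.prod_range_succ', mul_comm]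
  rw [coeff_mul_of_dvd]
  · simp [PowerSeries.coeff_one, PowerSeries.coeff_X_pow, hd.ne', mul_one]
  · refine dvd_sub_one_prod _ _ _ fun n _ => ?_
    have h1 : (1 : PowerSeries ℚ) - PowerSeries.X ^ (d * (n + 1 + 1)) - 1 =
        -(PowerSeries.X ^ (d * (n + 1 + 1))) := by ring
    rw [h1]
    exact dvd_neg.mpr (pow_dvd_pow _ (by nlinarith))

lemma coeff_zero_rpow (f : PowerSeries ℚ) (s : ℚ) :
    PowerSeries.coeff 0 (rpowSeries f s) = 1 := by
  rw [rpowSeries, PowerSeries.coeff_mk]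
  simp [qChoose]

lemma coeff_rpow_lt (d k : ℕ) (s : ℚ) (hd : 0 < d) (hk : 0 < k) (hkd : k < d) :
    PowerSeries.coeff k (rpowSeries (etaSeries d) s) = 0 := by
  rw [rpowSeries, PowerSeries.coeff_mk]
  refine Finset.sum_eq_zero fun j hj => ?_
  rcases Nat.eq_zero_or_pos j with rfl | hjp
  · simp [PowerSeries.coeff_one, hk.ne']
  · have hdvd : (PowerSeries.X : PowerSeries ℚ) ^ d ∣ (etaSeries d - 1) ^ j :=
      dvd_pow (eta_sub_one_dvd d hd) hjp.ne'
    rw [PowerSeries.X_pow_dvd_iff.mp hdvd k hkd, mul_zero]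

lemma coeff_rpow_self (d : ℕ) (s : ℚ) (hd : 0 < d) :
    PowerSeries.coeff d (rpowSeries (etaSeries d) s) = -s := by
  rw [rpowSeries, PowerSeries.coeff_mk]
  rw [Finset.sum_eq_single_of_mem 1 (Finset.mem_range.mpr (by omega))]
  · rw [pow_one, map_sub, coeff_eta_self d hd]
    simp [qChoose, PowerSeries.coeff_one, hd.ne']
  · intro j hj hj1
    rcases Nat.eq_zero_or_pos j with rfl | hjp
    · simp [PowerSeries.coeff_one, hd.ne']
    · have hj2 : 2 ≤ j := by omega
      have hdvd : (PowerSeries.X : PowerSeries ℚ) ^ (d * j) ∣ (etaSeries d - 1) ^ j := by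
        rw [pow_mul]
        exact pow_dvd_pow_of_dvd (eta_sub_one_dvd d hd) j
      have hlt : d < d * j := by nlinarith
      rw [PowerSeries.X_pow_dvd_iff.mp hdvd d hlt, mul_zero]

lemma rpow_sub_one_dvd (e : ℕ) (he : 0 < e) (s : ℚ) (n : ℕ) (hn : n ≤ e) :
    (PowerSeries.X : PowerSeries ℚ) ^ n ∣ (rpowSeries (etaSeries e) s - 1) := by
  rw [PowerSeries.X_pow_dvd_iff]
  intro m hm
  have hm' : m < e := lt_of_lt_of_le hm hn
  rw [map_sub]
  rcases Nat.eq_zero_or_pos m with rfl | h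
  · rw [coeff_zero_rpow]; simp
  · rw [coeff_rpow_lt e m s he h hm', PowerSeries.coeff_one, if_neg h.ne', sub_zero]

lemma sum_two (f : ℕ → ℚ) (d : ℕ) (hd : 0 < d)
    (h : ∀ k, 0 < k → k < d → f k = 0) :
    ∑ k ∈ Finset.range (d + 1), f k = f 0 + f d := by
  rw [Finset.sum_range_succ]
  congr 1
  rw [Finset.sum_eq_single_of_mem 0 (Finset.mem_range.mpr hd)]
  intro b hb hb0
  exact h b (Nat.pos_of_ne_zero hb0) (Finset.mem_range.mp hb)

end RW

open RW in
/-- Lemma "step 4" of Rouse–Webb: if `h = ∏_{d ∣ N} (∏_{n ≥ 1}(1 - q^{dn}))^{s_d}` with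
rational exponents `s_d` has all of its coefficients in `ℤ`, then every `s_d ∈ ℤ`
(so that, after multiplying by a suitable power of `q`, `h` is an honest eta-quotient). -/
theorem rational_exponent_eta_product_integral_coeffs_implies_integer_exponents
    (N : ℕ) (hN : 0 < N) (s : ℕ → ℚ)
    (hint : ∀ k : ℕ, ∃ m : ℤ,
      PowerSeries.coeff k (∏ d ∈ N.divisors, rpowSeries (etaSeries d) (s d)) = (m : ℚ)) :
    ∀ d ∈ N.divisors, ∃ m : ℤ, s d = (m : ℚ) := by
  set F : ℕ → PowerSeries ℚ := fun e => rpowSeries (etaSeries e) (s e) with hF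
  have key : ∀ d : ℕ, d ∈ N.divisors → s d ∈ R := by
    intro d
    induction d using Nat.strong_induction_on with
    | _ d ih =>
      intro hd
      have hdpos : 0 < d := Nat.pos_of_mem_divisors hd
      set T := N.divisors.filter (fun e => e ≤ d) with hT
      set B := N.divisors.filter (fun e => ¬ e ≤ d) with hB
      set A := N.divisors.filter (fun e => e < d) with hA
      have hsplit : ∏ e ∈ N.divisors, F e = (∏ e ∈ T, F e) * ∏ e ∈ B, F e :=
        (Finset.prod_filter_mul_prod_filter_not _ _ _).symm
      have hdT : d ∈ T := Finset.mem_filter.mpr ⟨hd, le_refl d⟩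
      have hTA : T.erase d = A := by
        ext e
        simp only [hT, hA, Finset.mem_erase, Finset.mem_filter]
        constructor
        · rintro ⟨h1, h2, h3⟩; exact ⟨h2, lt_of_le_of_ne h3 h1⟩
        · rintro ⟨h1, h2⟩; exact ⟨h2.ne, h1, h2.le⟩
      have hTprod : ∏ e ∈ T, F e = (∏ e ∈ A, F e) * F d := by
        rw [← Finset.mul_prod_erase T F hdT, hTA, mul_comm]
      obtain ⟨m, hm⟩ := hint d
      rw [hsplit, coeff_mul_of_dvd _ _ d (dvd_sub_one_prod B F (d + 1) ?_), hTprod] at hm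
      · -- compute the coefficient of degree d of (∏_A F) * F d
        have hAint : ∀ k, PowerSeries.coeff k (∏ e ∈ A, F e) ∈ R := by
          refine IntCoeffs.prod _ _ fun e he => ?_
          rw [hA, Finset.mem_filter] at he
          obtain ⟨me, hme⟩ := mem_R.mp (ih e he.2 he.1)
          rw [hF]
          simp only
          rw [hme]
          exact rpow_intCoeffs _ (etaSeries_intCoeffs e) me
        have hA0 : PowerSeries.coeff 0 (∏ e ∈ A, F e) = 1 := by
          rw [PowerSeries.coeff_zero_eq_constantCoeff, map_prod]
          refine Finset.prod_eq_one fun e _ => ?_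
          rw [← PowerSeries.coeff_zero_eq_constantCoeff]
          exact coeff_zero_rpow _ _
        have hcalc : PowerSeries.coeff d ((∏ e ∈ A, F e) * F d) =
            PowerSeries.coeff d (∏ e ∈ A, F e) - s d := by
          rw [PowerSeries.coeff_mul,
            Finset.Nat.sum_antidiagonal_eq_sum_range_succ
              (fun i j => PowerSeries.coeff i (∏ e ∈ A, F e) * PowerSeries.coeff j (F d)) d,
            sum_two _ d hdpos]
          · rw [Nat.sub_zero, Nat.sub_self, hA0, coeff_rpow_self d (s d) hdpos,
              coeff_zero_rpow]
            ring
          · intro k hk hkd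
            have h1 : 0 < d - k := by omega
            have h2 : d - k < d := by omega
            rw [hF]
            simp only
            rw [coeff_rpow_lt d (d - k) (s d) hdpos h1 h2, mul_zero]
        rw [hcalc] at hm
        have : s d = PowerSeries.coeff d (∏ e ∈ A, F e) - (m : ℚ) := by linarith
        rw [this]
        exact sub_mem (hAint d) ⟨m, rfl⟩
      · intro e he
        rw [hB, Finset.mem_filter] at he
        exact rpow_sub_one_dvd e (Nat.pos_of_mem_divisors he.1) (s e) (d + 1) (by omega)
  intro d hd
  obtain ⟨m, hm⟩ := mem_R.mp (key d hd)
  exact ⟨m, hm⟩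
end

section
/- The number of eta-quotients f(z) = Π_{δ|N} η(δz)^{r_δ} in M_k(Γ₀(4)) (k even, k ≥ 0) equals k²/8 + 3k/4 + 1, which equals the number of triples of non-negative integers (c₁,c₂,c₄) with c₁ + c₂ + c₄ = k/2. -/
open Finset

private lemma sum_div4' {M : Type*} [AddCommMonoid M] (f : ℕ → M) :
    ∑ δ ∈ (4:ℕ).divisors, f δ = f 1 + f 2 + f 4 := by
  rw [show (4:ℕ).divisors = {1,2,4} from by decide,
    show ({1,2,4}:Finset ℕ) = insert 1 (insert 2 {4}) from rfl,
    Finset.sum_insert (by decide), Finset.sum_insert (by decide), Finset.sum_singleton, add_assoc]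

private lemma prod_div4' {M : Type*} [CommMonoid M] (f : ℕ → M) :
    ∏ δ ∈ (4:ℕ).divisors, f δ = f 1 * f 2 * f 4 := by
  rw [show (4:ℕ).divisors = {1,2,4} from by decide,
    show ({1,2,4}:Finset ℕ) = insert 1 (insert 2 {4}) from rfl,
    Finset.prod_insert (by decide), Finset.prod_insert (by decide), Finset.prod_singleton,
    mul_assoc]

private def tEquiv' (n : ℕ) : {c : ℕ × ℕ × ℕ // c.1 + c.2.1 + c.2.2 = n} ≃
    Σ i : Fin (n+1), Fin (n+1-(i:ℕ)) where
  toFun c := ⟨⟨c.1.1, by have := c.2; omega⟩,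
    ⟨c.1.2.1, show c.1.2.1 < n+1-c.1.1 by have := c.2; omega⟩⟩
  invFun p := ⟨(p.1.1, p.2.1, n - p.1.1 - p.2.1),
    show p.1.1 + p.2.1 + (n - p.1.1 - p.2.1) = n by
      have h1 := p.1.2; have h2 := p.2.2; omega⟩
  left_inv c := by
    apply Subtype.ext
    have := c.2
    exact Prod.ext rfl (Prod.ext rfl (by dsimp; omega))
  right_inv p := rfl

private lemma cardT' (n : ℕ) : Nat.card {c : ℕ × ℕ × ℕ // c.1 + c.2.1 + c.2.2 = n}
    = (n+1)*(n+2)/2 := by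
  rw [Nat.card_congr (tEquiv' n), Nat.card_eq_fintype_card, Fintype.card_sigma]
  simp only [Fintype.card_fin]
  rw [Fin.sum_univ_eq_sum_range (fun i => n+1-i) (n+1)]
  have h1 : ∑ j ∈ range (n+1), (n+1-j) = ∑ j ∈ range (n+1), (j+1) := by
    rw [← Finset.sum_range_reflect (fun j => n+1-j) (n+1)]
    exact Finset.sum_congr rfl fun j hj => by
      have := Finset.mem_range.mp hj; omega
  have h2 : ∑ j ∈ range (n+1), (j+1) = ∑ j ∈ range (n+1), j + (n+1) := by
    rw [Finset.sum_add_distrib]; simp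
  have h3 : (∑ j ∈ range (n+1), j) * 2 = (n+1)*n := by
    simpa using Finset.sum_range_id_mul_two (n+1)
  rw [h1, h2]
  refine (Nat.div_eq_of_eq_mul_left two_pos ?_).symm
  calc (n+1)*(n+2) = (n+1)*n + (n+1)*2 := by ring
    _ = (∑ j ∈ range (n+1), j)*2 + (n+1)*2 := by rw [h3]
    _ = (∑ j ∈ range (n+1), j + (n+1)) * 2 := by ring

/-- The number of eta-quotients `∏_{δ∣4} η(δz)^{r_δ}` lying in `M_k(Γ₀(4))` (exponent
tuples satisfying Newman's transformation conditions for weight `k` and level `4`,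
together with Ligozat's non-negativity conditions at all cusps) equals
`k²/8 + 3k/4 + 1`, which is also the number of triples `(c₁,c₂,c₄)` of non-negative
integers with `c₁ + c₂ + c₄ = k/2`. -/
theorem count_eta_quotients_level_four (k : ℕ) (hk : Even k) :
    (Nat.card {r : ℕ → ℤ //
        (∀ δ : ℕ, δ ∉ (4 : ℕ).divisors → r δ = 0) ∧
        (∑ δ ∈ (4 : ℕ).divisors, r δ = 2 * (k : ℤ)) ∧
        ((24 : ℤ) ∣ ∑ δ ∈ (4 : ℕ).divisors, (δ : ℤ) * r δ) ∧
        ((24 : ℤ) ∣ ∑ δ ∈ (4 : ℕ).divisors, ((4 / δ : ℕ) : ℤ) * r δ) ∧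
        (∃ x : ℚ, ∏ δ ∈ (4 : ℕ).divisors, (δ : ℚ) ^ (r δ) = x ^ 2) ∧
        (∀ d ∈ (4 : ℕ).divisors, (0 : ℚ) ≤ ∑ δ ∈ (4 : ℕ).divisors,
          (Nat.gcd d δ : ℚ) ^ 2 * (r δ : ℚ) /
            ((Nat.gcd d (4 / d) : ℚ) * (d : ℚ) * (δ : ℚ)))} : ℚ)
      = (k : ℚ) ^ 2 / 8 + 3 * (k : ℚ) / 4 + 1 ∧
    Nat.card {r : ℕ → ℤ //
        (∀ δ : ℕ, δ ∉ (4 : ℕ).divisors → r δ = 0) ∧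
        (∑ δ ∈ (4 : ℕ).divisors, r δ = 2 * (k : ℤ)) ∧
        ((24 : ℤ) ∣ ∑ δ ∈ (4 : ℕ).divisors, (δ : ℤ) * r δ) ∧
        ((24 : ℤ) ∣ ∑ δ ∈ (4 : ℕ).divisors, ((4 / δ : ℕ) : ℤ) * r δ) ∧
        (∃ x : ℚ, ∏ δ ∈ (4 : ℕ).divisors, (δ : ℚ) ^ (r δ) = x ^ 2) ∧
        (∀ d ∈ (4 : ℕ).divisors, (0 : ℚ) ≤ ∑ δ ∈ (4 : ℕ).divisors,
          (Nat.gcd d δ : ℚ) ^ 2 * (r δ : ℚ) /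
            ((Nat.gcd d (4 / d) : ℚ) * (d : ℚ) * (δ : ℚ)))}
      = Nat.card {c : ℕ × ℕ × ℕ // 2 * (c.1 + c.2.1 + c.2.2) = k} := by
  obtain ⟨n, hkn⟩ := hk
  -- the backward map on raw functions
  set gfun : ℕ × ℕ × ℕ → ℕ → ℤ := fun c δ =>
    if δ = 1 then 8*c.1 + 16*c.2.1 - 4*(k:ℤ)
    else if δ = 2 then 24*c.2.2 - 2*(k:ℤ)
    else if δ = 4 then 16*c.1 + 8*c.2.1 - 4*(k:ℤ)
    else 0 with hgfun
  set P : (ℕ → ℤ) → Prop := fun r =>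
    (∀ δ : ℕ, δ ∉ (4 : ℕ).divisors → r δ = 0) ∧
    (∑ δ ∈ (4 : ℕ).divisors, r δ = 2 * (k : ℤ)) ∧
    ((24 : ℤ) ∣ ∑ δ ∈ (4 : ℕ).divisors, (δ : ℤ) * r δ) ∧
    ((24 : ℤ) ∣ ∑ δ ∈ (4 : ℕ).divisors, ((4 / δ : ℕ) : ℤ) * r δ) ∧
    (∃ x : ℚ, ∏ δ ∈ (4 : ℕ).divisors, (δ : ℚ) ^ (r δ) = x ^ 2) ∧
    (∀ d ∈ (4 : ℕ).divisors, (0 : ℚ) ≤ ∑ δ ∈ (4 : ℕ).divisors,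
      (Nat.gcd d δ : ℚ) ^ 2 * (r δ : ℚ) /
        ((Nat.gcd d (4 / d) : ℚ) * (d : ℚ) * (δ : ℚ))) with hP
  have gmem : ∀ c : {c : ℕ × ℕ × ℕ // 2 * (c.1 + c.2.1 + c.2.2) = k}, P (gfun c.1) := by
    rintro ⟨⟨c1, c2, c4⟩, hc⟩
    simp only at hc
    have h1 : gfun (c1,c2,c4) 1 = 8*c1 + 16*c2 - 4*(k:ℤ) := rfl
    have h2 : gfun (c1,c2,c4) 2 = 24*c4 - 2*(k:ℤ) := rfl
    have h4 : gfun (c1,c2,c4) 4 = 16*c1 + 8*c2 - 4*(k:ℤ) := rfl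
    have hq : ((c1:ℚ) + c2 + c4) * 2 = k := by
      have hq' : (c1+c2+c4)*2 = k := by omega
      exact_mod_cast hq'
    have n1 : (0:ℚ) ≤ c1 := Nat.cast_nonneg c1
    have n2 : (0:ℚ) ≤ c2 := Nat.cast_nonneg c2
    have n4 : (0:ℚ) ≤ c4 := Nat.cast_nonneg c4
    refine ⟨?_, ?_, ?_, ?_, ?_, ?_⟩
    · intro δ hδ
      rw [show (4:ℕ).divisors = {1,2,4} from by decide] at hδ
      simp only [Finset.mem_insert, Finset.mem_singleton, not_or] at hδ
      simp [hgfun, hδ.1, hδ.2.1, hδ.2.2]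
    · rw [sum_div4', h1, h2, h4]; push_cast; omega
    · rw [sum_div4']
      refine ⟨(c1 : ℤ), ?_⟩
      rw [h1, h2, h4]; push_cast; omega
    · rw [sum_div4']
      refine ⟨(c2 : ℤ), ?_⟩
      rw [h1, h2, h4]; push_cast; omega
    · rw [prod_div4', h1, h2, h4]
      refine ⟨(2:ℚ) ^ (12*(c4:ℤ) - k + (16*c1 + 8*c2 - 4*(k:ℤ))), ?_⟩
      rw [show ((1:ℕ):ℚ) = 1 from rfl, one_zpow, one_mul,
        show ((4:ℕ):ℚ) = (2:ℚ)^(2:ℤ) from by norm_num, ← zpow_mul,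
        show ((2:ℕ):ℚ) = (2:ℚ) from by norm_num,
        ← zpow_add₀ (two_ne_zero), pow_two, ← zpow_add₀ (two_ne_zero)]
      congr 1
      push_cast
      ring
    · intro d hd
      rw [show (4:ℕ).divisors = {1,2,4} from by decide] at hd
      rw [sum_div4']
      rcases Finset.mem_insert.mp hd with rfl | hd'
      · norm_num [h1, h2, h4]; linarith
      rcases Finset.mem_insert.mp hd' with rfl | hd''
      · norm_num [h1, h2, h4]; linarith
      · rw [Finset.mem_singleton.mp hd'']
        norm_num [h1, h2, h4]; linarith
  set g : {c : ℕ × ℕ × ℕ // 2 * (c.1 + c.2.1 + c.2.2) = k} → {r : ℕ → ℤ // P r} :=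
    fun c => ⟨gfun c.1, gmem c⟩ with hg
  have ginj : Function.Injective g := by
    rintro ⟨⟨c1, c2, c4⟩, hc⟩ ⟨⟨c1', c2', c4'⟩, hc'⟩ h
    have hfun : gfun (c1,c2,c4) = gfun (c1',c2',c4') := congrArg Subtype.val h
    have e1 := congrFun hfun 1
    have e2 := congrFun hfun 2
    have e4 := congrFun hfun 4
    simp only [hgfun] at e1 e2 e4
    norm_num at e1 e2 e4
    apply Subtype.ext
    simp only [Prod.mk.injEq]
    omega
  have gsurj : Function.Surjective g := by
    rintro ⟨r, hsupp, hsum, hA, hB, _, hineq⟩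
    rw [sum_div4'] at hsum
    obtain ⟨a, ha⟩ := hA
    obtain ⟨b, hb⟩ := hB
    rw [sum_div4'] at ha hb
    norm_num at ha hb
    have i1 := hineq 1 (by decide)
    have i2 := hineq 2 (by decide)
    have i4 := hineq 4 (by decide)
    rw [sum_div4'] at i1 i2 i4
    norm_num at i1 i2 i4
    have ha' : (0:ℤ) ≤ a := by
      have h : (0:ℚ) ≤ ((r 1 + 2 * r 2 + 4 * r 4 : ℤ) : ℚ) := by push_cast; linarith
      have h0 : (0:ℤ) ≤ r 1 + 2 * r 2 + 4 * r 4 := by exact_mod_cast h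
      omega
    have hb' : (0:ℤ) ≤ b := by
      have h : (0:ℚ) ≤ ((4 * r 1 + 2 * r 2 + r 4 : ℤ) : ℚ) := by push_cast; linarith
      have h0 : (0:ℤ) ≤ 4 * r 1 + 2 * r 2 + r 4 := by exact_mod_cast h
      omega
    have hm : (0:ℤ) ≤ r 1 + 2 * r 2 + r 4 := by
      have h : (0:ℚ) ≤ ((r 1 + 2 * r 2 + r 4 : ℤ) : ℚ) := by push_cast; linarith
      exact_mod_cast h
    refine ⟨⟨(a.toNat, b.toNat, n - a.toNat - b.toNat), by simp only; omega⟩, ?_⟩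
    apply Subtype.ext
    funext δ
    show gfun (a.toNat, b.toNat, n - a.toNat - b.toNat) δ = r δ
    simp only [hgfun]
    by_cases hδ1 : δ = 1
    · subst hδ1; norm_num; omega
    by_cases hδ2 : δ = 2
    · subst hδ2; norm_num; omega
    by_cases hδ4 : δ = 4
    · subst hδ4; norm_num; omega
    · simp only [hδ1, hδ2, hδ4, if_false]
      exact (hsupp δ (by rw [show (4:ℕ).divisors = {1,2,4} from by decide]; simp [hδ1, hδ2, hδ4])).symm
  have hcard : Nat.card {r : ℕ → ℤ // P r}
      = Nat.card {c : ℕ × ℕ × ℕ // 2 * (c.1 + c.2.1 + c.2.2) = k} :=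
    (Nat.card_congr (Equiv.ofBijective g ⟨ginj, gsurj⟩)).symm
  have hT : Nat.card {c : ℕ × ℕ × ℕ // 2 * (c.1 + c.2.1 + c.2.2) = k} = (n+1)*(n+2)/2 := by
    rw [Nat.card_congr (Equiv.subtypeEquivRight (q := fun c : ℕ × ℕ × ℕ =>
      c.1 + c.2.1 + c.2.2 = n) (fun c => by omega))]
    exact cardT' n
  refine ⟨?_, hcard⟩
  rw [hcard, hT]
  have hdvd : 2 ∣ (n+1)*(n+2) := (Nat.even_mul_succ_self (n+1)).two_dvd
  rw [Nat.cast_div hdvd (by norm_num)]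
  have hkq : (k:ℚ) = n + n := by exact_mod_cast hkn
  rw [hkq]
  push_cast
  field_simp
  ring
end

section
/- Let k be a positive even integer, N a positive integer, and suppose there exists a nonzero weakly holomorphic modular form f of weight k on Γ₀(N) that is non-vanishing on the upper half plane. If Γ₀(N) has an elliptic point of order 2 then 4 | k, and if Γ₀(N) has an elliptic point of order 3 then 6 | k. -/
open Complex UpperHalfPlane ModularForm
open scoped ModularForm Manifold

section AuxRW

open scoped MatrixGroups

/-- Cocycle property of `denom` for `SL(2, ℤ)`. -/
private lemma auxRW_denom_mul (γ δ : SL(2, ℤ)) (z : ℍ) :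
    UpperHalfPlane.denom ((γ * δ : SL(2, ℤ)) : GL (Fin 2) ℝ) z
      = UpperHalfPlane.denom (γ : GL (Fin 2) ℝ) ((δ • z : ℍ) : ℂ) * UpperHalfPlane.denom (δ : GL (Fin 2) ℝ) z := by
  rw [show ((γ * δ : SL(2, ℤ)) : GL (Fin 2) ℝ) = (γ : GL (Fin 2) ℝ) * δ by
      simp only [map_mul], UpperHalfPlane.denom_cocycle_σ, ModularGroup.sl_moeb]
  congr 1
  simp [σ]

/-- If `j` has exact order `n` and `j ^ k = 1` then `n ∣ k`. -/
private lemma auxRW_order_dvd (j : ℂ) (k : ℤ) (n : ℕ) (hn : 0 < n)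
    (hjn : j ^ n = 1) (hk1 : j ^ k = 1)
    (hmin : ∀ r : ℕ, r < n → j ^ r = 1 → r = 0) : (n : ℤ) ∣ k := by
  have hj0 : j ≠ 0 := by
    intro h; rw [h, zero_pow hn.ne'] at hjn; exact zero_ne_one hjn
  have hrange0 : 0 ≤ k % (n : ℤ) := Int.emod_nonneg k (by exact_mod_cast hn.ne')
  have hrange1 : k % (n : ℤ) < n := Int.emod_lt_of_pos k (by exact_mod_cast hn)
  have hsplit : (n : ℤ) * (k / n) + k % n = k := Int.mul_ediv_add_emod k n
  have hmod : j ^ (k % (n : ℤ)) = 1 := by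
    have : j ^ k = j ^ ((n : ℤ) * (k / n)) * j ^ (k % (n : ℤ)) := by
      rw [← zpow_add₀ hj0, hsplit]
    rw [hk1, zpow_mul, zpow_natCast, hjn, one_zpow, one_mul] at this
    exact this.symm
  have hr : j ^ (k % (n : ℤ)).toNat = 1 := by
    rw [← zpow_natCast, Int.toNat_of_nonneg hrange0]; exact hmod
  have hr0 : (k % (n : ℤ)).toNat = 0 := hmin _ (by omega) hr
  have : k % (n : ℤ) = 0 := by omega
  exact Int.dvd_of_emod_eq_zero this

end AuxRW

/-- The necessity direction of Lemma 5.1 of Rouse–Webb: if there is a nonzero weakly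
holomorphic modular form `f` of positive even weight `k` on `Γ₀(N)` which is
non-vanishing on the upper half plane, then the existence of an elliptic point of
order 2 for `Γ₀(N)` forces `4 ∣ k`, and the existence of an elliptic point of order 3
forces `6 ∣ k`. -/
theorem weight_divisibility_of_elliptic_points (N : ℕ) (hN : 0 < N) (k : ℤ)
    (hk : Even k) (hkpos : 0 < k) (f : UpperHalfPlane → ℂ)
    (hol : MDifferentiable 𝓘(ℂ) 𝓘(ℂ) f)
    (hslash : ∀ γ : Matrix.SpecialLinearGroup (Fin 2) ℤ,
      γ ∈ CongruenceSubgroup.Gamma0 N → f ∣[k] γ = f)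
    (hcusps : ∀ γ : Matrix.SpecialLinearGroup (Fin 2) ℤ, ∃ (m : ℤ) (b : ℕ → ℂ),
      ∀ z : UpperHalfPlane, (f ∣[k] γ) z =
        ∑' n : ℕ, b n * Complex.exp (2 * Real.pi * Complex.I * ((m + n : ℤ) : ℂ) * (z : ℂ) / N))
    (hnv : ∀ z : UpperHalfPlane, f z ≠ 0) :
    ((∃ (γ : Matrix.SpecialLinearGroup (Fin 2) ℤ) (z : UpperHalfPlane),
        γ ∈ CongruenceSubgroup.Gamma0 N ∧ γ • z = z ∧
        (γ : Matrix (Fin 2) (Fin 2) ℤ) ≠ 1 ∧ (γ : Matrix (Fin 2) (Fin 2) ℤ) ≠ -1 ∧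
        (γ : Matrix (Fin 2) (Fin 2) ℤ) ^ 2 = -1) → 4 ∣ k) ∧
    ((∃ (γ : Matrix.SpecialLinearGroup (Fin 2) ℤ) (z : UpperHalfPlane),
        γ ∈ CongruenceSubgroup.Gamma0 N ∧ γ • z = z ∧
        (γ : Matrix (Fin 2) (Fin 2) ℤ) ≠ 1 ∧ (γ : Matrix (Fin 2) (Fin 2) ℤ) ≠ -1 ∧
        ((γ : Matrix (Fin 2) (Fin 2) ℤ) ^ 3 = 1 ∨
          (γ : Matrix (Fin 2) (Fin 2) ℤ) ^ 3 = -1)) → 6 ∣ k) := by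
  -- common facts
  have key : ∀ (γ : Matrix.SpecialLinearGroup (Fin 2) ℤ) (z : UpperHalfPlane),
      γ ∈ CongruenceSubgroup.Gamma0 N → γ • z = z →
      (UpperHalfPlane.denom γ z) ^ k = 1 := by
    intro γ z hγ hz
    have h1 : (f ∣[k] γ) z = f z := by rw [hslash γ hγ]
    rw [slash_action_eq'_iff] at h1
    rw [hz] at h1
    have h2 : ((γ 1 0 : ℂ) * z + (γ 1 1 : ℂ)) ^ k = 1 := by
      have hf := hnv z
      field_simp at h1
      exact h1.symm
    rwa [ModularGroup.denom_apply]
  have denom_sq : ∀ (γ : Matrix.SpecialLinearGroup (Fin 2) ℤ) (z : UpperHalfPlane),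
      γ • z = z → UpperHalfPlane.denom ((γ * γ : Matrix.SpecialLinearGroup (Fin 2) ℤ)) z
        = UpperHalfPlane.denom γ z * UpperHalfPlane.denom γ z := by
    intro γ z hz
    rw [auxRW_denom_mul, hz]
  constructor
  · rintro ⟨γ, z, hγ, hz, hγ1, hγm1, h2⟩
    set j := UpperHalfPlane.denom γ z with hj
    have hjk : j ^ k = 1 := key γ z hγ hz
    have hmsq : ((γ * γ : Matrix.SpecialLinearGroup (Fin 2) ℤ) : Matrix (Fin 2) (Fin 2) ℤ)
        = -1 := by
      rw [Matrix.SpecialLinearGroup.coe_mul, ← sq]; exact h2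
    have hj2 : j * j = -1 := by
      rw [hj, ← denom_sq γ z hz, ModularGroup.denom_apply, hmsq]
      simp
    have hj4 : j ^ 4 = 1 := by
      have : j ^ 4 = (j * j) * (j * j) := by ring
      rw [this, hj2]; ring
    refine auxRW_order_dvd j k 4 (by norm_num) hj4 hjk ?_
    intro r hr h1
    interval_cases r
    · rfl
    · rw [pow_one] at h1; rw [h1] at hj2; norm_num at hj2
    · rw [pow_two] at h1; rw [h1] at hj2; norm_num at hj2
    · have : j ^ 4 = j ^ 3 * j := by ring
      rw [hj4, h1, one_mul] at this
      rw [← this] at hj2; norm_num at hj2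
  · rintro ⟨γ, z, hγ, hz, hγ1, hγm1, h3⟩
    set j := UpperHalfPlane.denom γ z with hj
    have hjk : j ^ k = 1 := key γ z hγ hz
    have hm3 : ((γ * γ * γ : Matrix.SpecialLinearGroup (Fin 2) ℤ) : Matrix (Fin 2) (Fin 2) ℤ)
        = (γ : Matrix (Fin 2) (Fin 2) ℤ) ^ 3 := by
      rw [Matrix.SpecialLinearGroup.coe_mul, Matrix.SpecialLinearGroup.coe_mul, pow_succ, pow_two]
    have hcube : UpperHalfPlane.denom ((γ * γ * γ : Matrix.SpecialLinearGroup (Fin 2) ℤ)) z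
        = j * j * j := by
      rw [auxRW_denom_mul (γ * γ) γ z, hz, denom_sq γ z hz]
    -- the lower-left entry of γ is nonzero
    have hc : (γ : Matrix (Fin 2) (Fin 2) ℤ) 1 0 ≠ 0 := by
      intro hc0
      have hdet : (γ : Matrix (Fin 2) (Fin 2) ℤ) 0 0 * (γ : Matrix (Fin 2) (Fin 2) ℤ) 1 1
          - (γ : Matrix (Fin 2) (Fin 2) ℤ) 0 1 * (γ : Matrix (Fin 2) (Fin 2) ℤ) 1 0 = 1 := by
        have hd := γ.prop
        rwa [Matrix.det_fin_two] at hd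
      rw [hc0, mul_zero, sub_zero] at hdet
      have hent : ((γ : Matrix (Fin 2) (Fin 2) ℤ) ^ 3) 0 1 = 0 := by
        rcases h3 with h | h <;> rw [h] <;> simp [Matrix.one_apply, Matrix.neg_apply]
      have hent' : ((γ : Matrix (Fin 2) (Fin 2) ℤ) ^ 3) 0 1
          = (γ : Matrix (Fin 2) (Fin 2) ℤ) 0 0 * (γ : Matrix (Fin 2) (Fin 2) ℤ) 0 0
              * (γ : Matrix (Fin 2) (Fin 2) ℤ) 0 1
            + (γ : Matrix (Fin 2) (Fin 2) ℤ) 0 0 * (γ : Matrix (Fin 2) (Fin 2) ℤ) 0 1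
              * (γ : Matrix (Fin 2) (Fin 2) ℤ) 1 1
            + (γ : Matrix (Fin 2) (Fin 2) ℤ) 0 1 * (γ : Matrix (Fin 2) (Fin 2) ℤ) 1 1
              * (γ : Matrix (Fin 2) (Fin 2) ℤ) 1 1 := by
        rw [pow_succ, pow_two]
        simp [Matrix.mul_apply, Fin.sum_univ_two, hc0]
        ring
      rcases Int.mul_eq_one_iff_eq_one_or_neg_one.mp hdet with ⟨ha, hd⟩ | ⟨ha, hd⟩ <;>
        rw [hent', ha, hd] at hent
      · have hb : (γ : Matrix (Fin 2) (Fin 2) ℤ) 0 1 = 0 := by linarith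
        apply hγ1
        ext i jj
        fin_cases i <;> fin_cases jj <;>
          simp [ha, hd, hb, hc0, Matrix.one_apply]
      · have hb : (γ : Matrix (Fin 2) (Fin 2) ℤ) 0 1 = 0 := by linarith
        apply hγm1
        ext i jj
        fin_cases i <;> fin_cases jj <;>
          simp [ha, hd, hb, hc0, Matrix.one_apply, Matrix.neg_apply]
    -- hence j is not real, in particular j ≠ 1 and j ≠ -1
    have him : j.im ≠ 0 := by
      rw [hj, ModularGroup.denom_apply]
      simp only [Complex.add_im, Complex.mul_im, Complex.intCast_im, Complex.intCast_re]
      have : ((γ : Matrix (Fin 2) (Fin 2) ℤ) 1 0 : ℝ) ≠ 0 := Int.cast_ne_zero.mpr hc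
      have him' := z.im_pos
      simp only [UpperHalfPlane.coe_im, UpperHalfPlane.coe_re, zero_mul, add_zero, mul_zero]
      exact mul_ne_zero this (ne_of_gt him')
    have hj1 : j ≠ 1 := fun h => him (by rw [h]; simp)
    have hjm1 : j ≠ -1 := fun h => him (by rw [h]; simp)
    rcases h3 with h3 | h3
    · have hj3 : j ^ 3 = 1 := by
        have : UpperHalfPlane.denom ((γ * γ * γ : Matrix.SpecialLinearGroup (Fin 2) ℤ)) z = 1 := by
          rw [ModularGroup.denom_apply, hm3, h3]
          simp [Matrix.one_apply]
        rw [hcube] at this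
        rw [show j ^ 3 = j * j * j by ring, this]
      have h3k : (3 : ℤ) ∣ k := by
        refine auxRW_order_dvd j k 3 (by norm_num) hj3 hjk ?_
        intro r hr h1
        interval_cases r
        · rfl
        · rw [pow_one] at h1; exact absurd h1 hj1
        · have : j ^ 3 = j ^ 2 * j := by ring
          rw [hj3, h1, one_mul] at this
          exact absurd this.symm hj1
      obtain ⟨m, hm⟩ := hk
      omega
    · have hj3 : j ^ 3 = -1 := by
        have : UpperHalfPlane.denom ((γ * γ * γ : Matrix.SpecialLinearGroup (Fin 2) ℤ)) z = -1 := by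
          rw [ModularGroup.denom_apply, hm3, h3]
          simp [Matrix.one_apply, Matrix.neg_apply]
        rw [hcube] at this
        rw [show j ^ 3 = j * j * j by ring, this]
      have hj6 : j ^ 6 = 1 := by
        have : j ^ 6 = (j ^ 3) * (j ^ 3) := by ring
        rw [this, hj3]; ring
      refine auxRW_order_dvd j k 6 (by norm_num) hj6 hjk ?_
      intro r hr h1
      have hsq : j ^ 2 ≠ 1 := by
        intro h2
        have : j ^ 3 = j ^ 2 * j := by ring
        rw [hj3, h2, one_mul] at this
        exact absurd this.symm hjm1
      interval_cases r
      · rfl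
      · rw [pow_one] at h1; exact absurd h1 hj1
      · exact absurd h1 hsq
      · rw [h1] at hj3; norm_num at hj3
      · have : j ^ 6 = j ^ 4 * j ^ 2 := by ring
        rw [hj6, h1, one_mul] at this
        exact absurd this.symm hsq
      · have : j ^ 6 = j ^ 5 * j := by ring
        rw [hj6, h1, one_mul] at this
        exact absurd this.symm hj1
end

section
/- Let k be a positive even integer and suppose the exponents (r_δ)_{δ|N} of an eta-quotient f(z) = Π_{δ|N} η(δz)^{r_δ} ∈ M_k(Γ₀(N)) satisfy Ligozat's non-negativity conditions at all cusps. Then Σ_{δ|N} |r_δ| ≤ 2k·Π_{p|N} ((p+1)/(p−1))^{min(2, ord_p(N))}. -/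
open Finset

lemma rw_sum_divisors_coprime_mul {M : Type*} [AddCommMonoid M] {m n : ℕ} (h : Nat.Coprime m n)
    (hm : m ≠ 0) (hn : n ≠ 0) (f : ℕ → M) :
    ∑ d ∈ (m*n).divisors, f d = ∑ a ∈ m.divisors, ∑ b ∈ n.divisors, f (a*b) := by
  rw [← Finset.sum_product']
  refine Finset.sum_nbij' (fun d => (Nat.gcd d m, Nat.gcd d n)) (fun x => x.1 * x.2)
    ?_ ?_ ?_ ?_ ?_
  · intro d hd
    simp only [Finset.mem_product, Nat.mem_divisors]
    exact ⟨⟨Nat.gcd_dvd_right _ _, hm⟩, ⟨Nat.gcd_dvd_right _ _, hn⟩⟩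
  · intro x hx
    simp only [Finset.mem_product, Nat.mem_divisors] at hx
    exact Nat.mem_divisors.2 ⟨mul_dvd_mul hx.1.1 hx.2.1, mul_ne_zero hm hn⟩
  · intro d hd
    rw [Nat.mem_divisors] at hd
    exact (Nat.gcd_mul_gcd_eq_iff_dvd_mul_of_coprime h).2 hd.1
  · intro x hx
    simp only [Finset.mem_product, Nat.mem_divisors] at hx
    have hbm : Nat.Coprime x.2 m := Nat.Coprime.coprime_dvd_left hx.2.1 h.symm
    have han : Nat.Coprime x.1 n := Nat.Coprime.coprime_dvd_left hx.1.1 h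
    have h1 : Nat.gcd (x.1 * x.2) m = x.1 := by
      rw [Nat.Coprime.gcd_mul_right_cancel x.1 hbm, Nat.gcd_eq_left hx.1.1]
    have h2 : Nat.gcd (x.1 * x.2) n = x.2 := by
      rw [Nat.Coprime.gcd_mul_left_cancel x.2 han, Nat.gcd_eq_left hx.2.1]
    simp [h1, h2]
  · intro d hd
    rw [Nat.mem_divisors] at hd
    rw [(Nat.gcd_mul_gcd_eq_iff_dvd_mul_of_coprime h).2 hd.1]

/-- Entries of the inverse of the prime-power Ligozat matrix (column `j`, row `i`). -/
def bb (p a i j : ℕ) : ℚ :=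
  (if i = j then (if 0 < i ∧ i < a then (p:ℚ)^2+1 else (p:ℚ)^2)
   else if i+1 = j ∨ j+1 = i then -(p:ℚ) else 0) / (((p:ℚ)^2-1) * (p:ℚ)^j)

lemma bb_eq_zero {p a i j : ℕ} (h1 : i ≠ j) (h2 : i+1 ≠ j) (h3 : j+1 ≠ i) : bb p a i j = 0 := by
  simp [bb, h1, h2, h3]

lemma sum_tri {a c : ℕ} (hc : c ≤ a) (F : ℕ → ℚ)
    (hF : ∀ j, j ≠ c → j ≠ c+1 → ¬(j = c-1 ∧ 1 ≤ c) → F j = 0) :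
    ∑ j ∈ range (a+1), F j =
      F c + (if c+1 ≤ a then F (c+1) else 0) + (if 1 ≤ c then F (c-1) else 0) := by
  have hsplit : ∀ j ∈ range (a+1), F j =
      (if j = c then F c else 0) + (if j = c+1 then F (c+1) else 0) +
        (if j = c-1 ∧ 1 ≤ c then F (c-1) else 0) := by
    intro j _
    rcases eq_or_ne j c with rfl | h1
    · have h2 : ¬ (j = j + 1) := by omega
      have h3 : ¬ (j = j - 1 ∧ 1 ≤ j) := by omega
      simp [h2, h3]
    · rcases eq_or_ne j (c+1) with rfl | h2
      · have h3 : ¬ (c + 1 = c - 1 ∧ 1 ≤ c) := by omega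
        simp [h1, h3]
      · by_cases h3 : j = c-1 ∧ 1 ≤ c
        · rcases h3 with ⟨rfl, hc1⟩
          simp [h1, h2, hc1]
        · simp [h1, h2, h3, hF j h1 h2 h3]
  rw [Finset.sum_congr rfl hsplit, Finset.sum_add_distrib, Finset.sum_add_distrib]
  congr 1
  · congr 1
    · rw [Finset.sum_ite_eq' (range (a+1)) c (fun _ => F c)]
      simp [Nat.lt_succ_iff, hc]
    · rw [Finset.sum_ite_eq' (range (a+1)) (c+1) (fun _ => F (c+1))]
      simp only [Finset.mem_range, Nat.lt_succ_iff]
  · by_cases h : 1 ≤ c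
    · simp only [h, and_true]
      rw [Finset.sum_ite_eq' (range (a+1)) (c-1) (fun _ => F (c-1))]
      simp [Nat.lt_succ_iff, h]
      omega
    · simp [h]

lemma sum_bb_mul {p a i : ℕ} (hi : i ≤ a) (G : ℕ → ℚ) :
    ∑ j ∈ range (a+1), bb p a i j * G j =
      bb p a i i * G i + (if i+1 ≤ a then bb p a i (i+1) * G (i+1) else 0) +
        (if 1 ≤ i then bb p a i (i-1) * G (i-1) else 0) :=
  sum_tri hi _ (fun j h1 h2 h3 => by
    rw [bb_eq_zero (fun h => h1 h.symm) (fun h => h2 h.symm) (by omega), zero_mul])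

lemma bb_inv {p a i i' : ℕ} (hp : 2 ≤ p) (ha : 1 ≤ a) (hi : i ≤ a) (hi' : i' ≤ a) :
    ∑ j ∈ range (a+1), bb p a i j * ((p:ℚ)^(2 * min j i') / (p:ℚ)^i') =
      if i = i' then 1 else 0 := by
  have hq2 : (2:ℚ) ≤ (p:ℚ) := by exact_mod_cast hp
  have hq0 : (p:ℚ) ≠ 0 := by nlinarith
  have hD : ((p:ℚ)^2 - 1) ≠ 0 := by nlinarith
  rw [sum_bb_mul hi]
  rcases lt_trichotomy i i' with hlt | rfl | hgt
  · -- i < i'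
    have hsup : i + 1 ≤ a := by omega
    rw [if_neg (by omega : ¬ i = i'), if_pos hsup]
    rw [min_eq_left (by omega : i ≤ i'), min_eq_left (by omega : i + 1 ≤ i')]
    rcases Nat.eq_zero_or_pos i with rfl | hpos
    · simp only [bb, if_neg (by omega : ¬ (0:ℕ) = 1), if_pos rfl,
        if_neg (by omega : ¬ (0 < 0 ∧ 0 < a)), if_pos (by omega : 0+1 = 1 ∨ 1+1 = 0),
        Nat.le_refl, if_neg (by omega : ¬ 1 ≤ 0)]
      field_simp
      simp only [↓reduceIte, true_or, or_true]
      ring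
    · obtain ⟨n, rfl⟩ : ∃ n, i = n+1 := ⟨i-1, by omega⟩
      have hint : 0 < n+1 ∧ n+1 < a := by omega
      rw [if_pos (by omega : 1 ≤ n+1)]
      simp only [Nat.add_sub_cancel]
      rw [min_eq_left (by omega : n ≤ i')]
      simp only [bb, if_pos rfl, if_pos hint, if_neg (by omega : ¬ n+1 = n+1+1),
        if_pos (Or.inl rfl : n+1+1 = n+1+1 ∨ n+1+1+1 = n+1),
        if_neg (by omega : ¬ n+1 = n), if_pos (Or.inr rfl : n+1+1 = n ∨ n+1 = n+1)]
      field_simp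
      simp only [↓reduceIte, true_or, or_true]
      ring
  · -- i = i'
    rw [if_pos rfl, min_self, min_eq_right (by omega : i ≤ i+1)]
    rcases Nat.eq_zero_or_pos i with rfl | hpos
    · rw [if_pos (by omega : 0+1 ≤ a), if_neg (by omega : ¬ 1 ≤ 0)]
      simp only [bb, if_pos rfl, if_neg (by omega : ¬ (0 < 0 ∧ 0 < a)),
        if_neg (by omega : ¬ (0:ℕ) = 0+1), if_pos (Or.inl rfl : 0+1 = 0+1 ∨ 0+1+1 = 0)]
      field_simp
      simp only [↓reduceIte, true_or, or_true]
      ring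
    · obtain ⟨n, rfl⟩ : ∃ n, i = n+1 := ⟨i-1, by omega⟩
      rw [if_pos (by omega : 1 ≤ n+1)]
      simp only [Nat.add_sub_cancel]
      rw [min_eq_left (by omega : n ≤ n+1)]
      rcases eq_or_lt_of_le hi with rfl | hlt2
      · rw [if_neg (by omega : ¬ n+1+1 ≤ n+1)]
        simp only [bb, if_pos rfl, if_neg (by omega : ¬ (0 < n+1 ∧ n+1 < n+1)),
          if_neg (by omega : ¬ n+1 = n), if_pos (Or.inr rfl : n+1+1 = n ∨ n+1 = n+1)]
        field_simp
        simp only [↓reduceIte, true_or, or_true]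
        ring
      · rw [if_pos (by omega : n+1+1 ≤ a)]
        simp only [bb, if_pos rfl, if_pos (by omega : 0 < n+1 ∧ n+1 < a),
          if_neg (by omega : ¬ n+1 = n+1+1),
          if_pos (Or.inl rfl : n+1+1 = n+1+1 ∨ n+1+1+1 = n+1),
          if_neg (by omega : ¬ n+1 = n), if_pos (Or.inr rfl : n+1+1 = n ∨ n+1 = n+1)]
        field_simp
        simp only [↓reduceIte, true_or, or_true]
        ring
  · -- i' < i
    obtain ⟨n, rfl⟩ : ∃ n, i = n+1 := ⟨i-1, by omega⟩
    rw [if_neg (by omega : ¬ n+1 = i'), if_pos (by omega : 1 ≤ n+1)]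
    simp only [Nat.add_sub_cancel]
    rw [min_eq_right (by omega : i' ≤ n+1), min_eq_right (by omega : i' ≤ n+1+1),
      min_eq_right (by omega : i' ≤ n)]
    rcases eq_or_lt_of_le hi with rfl | hlt2
    · rw [if_neg (by omega : ¬ n+1+1 ≤ n+1)]
      simp only [bb, if_pos rfl, if_neg (by omega : ¬ (0 < n+1 ∧ n+1 < n+1)),
        if_neg (by omega : ¬ n+1 = n), if_pos (Or.inr rfl : n+1+1 = n ∨ n+1 = n+1)]
      field_simp
      simp only [↓reduceIte, true_or, or_true]
      ring
    · rw [if_pos (by omega : n+1+1 ≤ a)]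
      simp only [bb, if_pos rfl, if_pos (by omega : 0 < n+1 ∧ n+1 < a),
        if_neg (by omega : ¬ n+1 = n+1+1),
        if_pos (Or.inl rfl : n+1+1 = n+1+1 ∨ n+1+1+1 = n+1),
        if_neg (by omega : ¬ n+1 = n), if_pos (Or.inr rfl : n+1+1 = n ∨ n+1 = n+1)]
      field_simp
      simp only [↓reduceIte, true_or, or_true]
      ring

lemma bb_col {p a j : ℕ} (hp : 2 ≤ p) (ha : 1 ≤ a) (hj : j ≤ a) :
    (0 < ∑ i ∈ range (a+1), bb p a i j) ∧
    ∑ i ∈ range (a+1), |bb p a i j| ≤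
      (((p:ℚ)+1)/((p:ℚ)-1))^(min 2 a) * ∑ i ∈ range (a+1), bb p a i j := by
  have hq2 : (2:ℚ) ≤ (p:ℚ) := by exact_mod_cast hp
  have hq1 : (1:ℚ) < (p:ℚ) := by linarith
  have hD : (0:ℚ) < (p:ℚ)^2 - 1 := by nlinarith
  have hX : (0:ℚ) < (p:ℚ)^j := by positivity
  have hvan : ∀ i, i ≠ j → i ≠ j+1 → ¬(i = j-1 ∧ 1 ≤ j) → bb p a i j = 0 :=
    fun i h1 h2 h3 => bb_eq_zero h1 (by omega) (fun h => h2 h.symm)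
  have hS := sum_tri hj (fun i => bb p a i j) hvan
  have hT := sum_tri hj (fun i => |bb p a i j|) (fun i h1 h2 h3 => by
    simp [hvan i h1 h2 h3])
  have hmin : min 2 a = 1 ∨ min 2 a = 2 := by omega
  -- compute the closed forms, splitting on the position of j
  have main : ∃ s t : ℚ, (∑ i ∈ range (a+1), bb p a i j = s / (((p:ℚ)^2-1) * (p:ℚ)^j)) ∧
      (∑ i ∈ range (a+1), |bb p a i j| = t / (((p:ℚ)^2-1) * (p:ℚ)^j)) ∧ 0 < s ∧
      t * ((p:ℚ)-1) ^ (min 2 a) ≤ ((p:ℚ)+1) ^ (min 2 a) * s := by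
    have habs : |(-(p:ℚ)) / (((p:ℚ)^2-1) * (p:ℚ)^j)| = (p:ℚ) / (((p:ℚ)^2-1) * (p:ℚ)^j) := by
      rw [abs_div, abs_neg, abs_of_pos (by positivity), abs_of_pos (by positivity)]
    rcases Nat.eq_zero_or_pos j with rfl | hj1
    · -- j = 0 : boundary column
      have hd : bb p a 0 0 = (p:ℚ)^2 / (((p:ℚ)^2-1) * (p:ℚ)^0) := by
        simp [bb, (by omega : ¬ (0 < 0 ∧ 0 < a))]
      have hs : bb p a (0+1) 0 = -(p:ℚ) / (((p:ℚ)^2-1) * (p:ℚ)^0) := by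
        simp [bb]
      refine ⟨(p:ℚ)^2 - (p:ℚ), (p:ℚ)^2 + (p:ℚ), ?_, ?_, by nlinarith, ?_⟩
      · rw [hS, if_pos (by omega : 0+1 ≤ a), if_neg (by omega : ¬ 1 ≤ 0), hd, hs]
        field_simp
        try ring
      · rw [hT, if_pos (by omega : 0+1 ≤ a), if_neg (by omega : ¬ 1 ≤ 0), hd, hs, habs,
          abs_div, abs_of_pos (by positivity : (0:ℚ) < (p:ℚ)^2), abs_of_pos (by positivity)]
        field_simp
        try ring
      · rcases hmin with hm | hm <;> rw [hm] <;> nlinarith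
    · obtain ⟨n, rfl⟩ : ∃ n, j = n+1 := ⟨j-1, by omega⟩
      simp only [Nat.add_sub_cancel] at hS hT ⊢
      rcases eq_or_lt_of_le hj with heq | hj2
      · -- j = a ≥ 1 : other boundary
        subst heq
        have hd : bb p (n+1) (n+1) (n+1) = (p:ℚ)^2 / (((p:ℚ)^2-1) * (p:ℚ)^(n+1)) := by
          simp [bb, (by omega : ¬ (0 < n+1 ∧ n+1 < n+1))]
        have hs : bb p (n+1) n (n+1) = -(p:ℚ) / (((p:ℚ)^2-1) * (p:ℚ)^(n+1)) := by
          simp [bb, (by omega : ¬ (n = n+1)), (by omega : n+1 = n+1 ∨ n+1+1 = n)]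
        refine ⟨(p:ℚ)^2 - (p:ℚ), (p:ℚ)^2 + (p:ℚ), ?_, ?_, by nlinarith, ?_⟩
        · rw [hS, if_neg (by omega : ¬ n+1+1 ≤ n+1), if_pos (show 1 ≤ n+1 by omega), hd, hs]
          field_simp
          try ring
        · rw [hT, if_neg (by omega : ¬ n+1+1 ≤ n+1), if_pos (show 1 ≤ n+1 by omega), hd, hs, habs,
            abs_div, abs_of_pos (by positivity : (0:ℚ) < (p:ℚ)^2), abs_of_pos (by positivity)]
          field_simp
          try ring
        · rcases hmin with hm | hm <;> rw [hm] <;> nlinarith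
      · -- 0 < j < a : interior column
        have hd : bb p a (n+1) (n+1) = ((p:ℚ)^2+1) / (((p:ℚ)^2-1) * (p:ℚ)^(n+1)) := by
          simp [bb, (by omega : 0 < n+1 ∧ n+1 < a)]
        have hs1 : bb p a (n+1+1) (n+1) = -(p:ℚ) / (((p:ℚ)^2-1) * (p:ℚ)^(n+1)) := by
          simp [bb, (by omega : ¬ (n+1+1 = n+1)), (by omega : n+1+1+1 = n+1 ∨ n+1+1 = n+1+1)]
        have hs2 : bb p a n (n+1) = -(p:ℚ) / (((p:ℚ)^2-1) * (p:ℚ)^(n+1)) := by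
          simp [bb, (by omega : ¬ (n = n+1)), (by omega : n+1 = n+1 ∨ n+1+1 = n)]
        have hm : min 2 a = 2 := by omega
        refine ⟨((p:ℚ) - 1)^2, ((p:ℚ) + 1)^2, ?_, ?_, by nlinarith, ?_⟩
        · rw [hS, if_pos (by omega : n+1+1 ≤ a), if_pos (show 1 ≤ n+1 by omega), hd, hs1, hs2]
          field_simp
          try ring
        · rw [hT, if_pos (by omega : n+1+1 ≤ a), if_pos (show 1 ≤ n+1 by omega), hd, hs1, hs2, habs,
            abs_div, abs_of_pos (by positivity : (0:ℚ) < (p:ℚ)^2+1), abs_of_pos (by positivity)]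
          field_simp
          try ring
        · rw [hm] <;> nlinarith
  obtain ⟨s, t, hSv, hTv, hspos, hkey⟩ := main
  have hden : (0:ℚ) < ((p:ℚ)^2-1) * (p:ℚ)^j := by positivity
  constructor
  · rw [hSv]; exact div_pos hspos hden
  · have hp1 : (0:ℚ) < (p:ℚ) - 1 := by linarith
    rw [hSv, hTv, div_pow, div_mul_div_comm,
      div_le_div_iff₀ hden (mul_pos (pow_pos hp1 _) hden)]
    nlinarith [mul_le_mul_of_nonneg_right hkey hden.le, mul_pos hden hden]

/-- The inverse Ligozat matrix for level `N`. -/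
def BB (N δ d : ℕ) : ℚ :=
  ∏ p ∈ N.primeFactors, bb p (N.factorization p) (δ.factorization p) (d.factorization p)

/-- The Rouse–Webb constant. -/
def CC (N : ℕ) : ℚ :=
  ∏ p ∈ N.primeFactors, (((p:ℚ)+1)/((p:ℚ)-1))^(min 2 (N.factorization p))

lemma exists_rep {p k x d : ℕ} (hp : p.Prime) (hpx : ¬ p ∣ x) (hd : d ∣ p^k * x) :
    ∃ i ≤ k, ∃ e, e ∣ x ∧ d = p^i * e := by
  have hcop : Nat.Coprime (p^k) x := Nat.Coprime.pow_left k ((hp.coprime_iff_not_dvd).2 hpx)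
  have hde : Nat.gcd d (p^k) * Nat.gcd d x = d :=
    (Nat.gcd_mul_gcd_eq_iff_dvd_mul_of_coprime hcop).2 hd
  obtain ⟨i, hi, hc⟩ := (Nat.dvd_prime_pow hp).1 (Nat.gcd_dvd_right d (p^k))
  exact ⟨i, hi, Nat.gcd d x, Nat.gcd_dvd_right d x, by rw [← hc]; exact hde.symm⟩

lemma gcd_split {p j i' f e' : ℕ} (hp : p.Prime) (hpf : ¬ p ∣ f) (hpe' : ¬ p ∣ e') :
    Nat.gcd (p^j * f) (p^i' * e') = p^(min j i') * Nat.gcd f e' := by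
  apply Nat.dvd_antisymm
  · obtain ⟨s, hs, t, ht, hg⟩ := exists_rep hp hpf (Nat.gcd_dvd_left (p^j * f) (p^i' * e'))
    have hpt : ¬ p ∣ t := fun h => hpf (h.trans ht)
    have h2 : p^s * t ∣ p^i' * e' := hg ▸ Nat.gcd_dvd_right (p^j * f) (p^i' * e')
    have hte' : t ∣ e' := by
      have h3 : t ∣ p^i' * e' := dvd_trans (dvd_mul_left t (p^s)) h2
      exact (Nat.Coprime.pow_right i' ((hp.coprime_iff_not_dvd).2 hpt).symm).dvd_of_dvd_mul_left h3
    have hsi' : s ≤ i' := by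
      have h4 : p^s ∣ p^i' * e' := dvd_trans (dvd_mul_right (p^s) t) h2
      have h5 : p^s ∣ p^i' :=
        (Nat.Coprime.pow_left s ((hp.coprime_iff_not_dvd).2 hpe')).dvd_of_dvd_mul_right h4
      exact (Nat.pow_dvd_pow_iff_le_right hp.one_lt).1 h5
    rw [hg]
    exact mul_dvd_mul (pow_dvd_pow p (le_min hs hsi')) (Nat.dvd_gcd ht hte')
  · exact Nat.dvd_gcd
      (mul_dvd_mul (pow_dvd_pow p (min_le_left j i')) (Nat.gcd_dvd_left f e'))
      (mul_dvd_mul (pow_dvd_pow p (min_le_right j i')) (Nat.gcd_dvd_right f e'))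

lemma fact_self {p k x : ℕ} (hp : p.Prime) (hx : x ≠ 0) (hpx : ¬ p ∣ x) :
    (p^k * x).factorization p = k := by
  rw [Nat.factorization_mul (pow_ne_zero k hp.ne_zero) hx, Finsupp.add_apply,
    hp.factorization_pow, Finsupp.single_eq_same, Nat.factorization_eq_zero_of_not_dvd hpx]
  omega

lemma fact_other {p k x q : ℕ} (hp : p.Prime) (hx : x ≠ 0) (hq : q ≠ p) :
    (p^k * x).factorization q = x.factorization q := by
  rw [Nat.factorization_mul (pow_ne_zero k hp.ne_zero) hx, Finsupp.add_apply,
    hp.factorization_pow, Finsupp.single_eq_of_ne' (fun h => hq h.symm), zero_add]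

lemma rep_inj {p i i' e e' : ℕ} (hp : p.Prime) (hpe : ¬ p ∣ e) (hpe' : ¬ p ∣ e')
    (he : e ≠ 0) (h : p^i * e = p^i' * e') : i = i' ∧ e = e' := by
  have he' : e' ≠ 0 := by
    rintro rfl
    exact (mul_ne_zero (pow_ne_zero i hp.ne_zero) he) (by simpa using h)
  have hii : i = i' := by
    have := congrArg (fun x => x.factorization p) h
    simpa [fact_self hp he hpe, fact_self hp he' hpe'] using this
  subst hii
  exact ⟨rfl, Nat.eq_of_mul_eq_mul_left (pow_pos hp.pos i) h⟩

lemma BB_step {p n m : ℕ} (hp : p.Prime) (hn : 1 ≤ n) (hm : m ≠ 0) (hpm : ¬ p ∣ m)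
    {i j e f : ℕ} (he : e ∣ m) (hf : f ∣ m) :
    BB (p^n*m) (p^i*e) (p^j*f) = bb p n i j * BB m e f := by
  have hpe : ¬ p ∣ e := fun h => hpm (h.trans he)
  have hpf : ¬ p ∣ f := fun h => hpm (h.trans hf)
  have he0 : e ≠ 0 := fun h => hm (by simpa [h] using he)
  have hf0 : f ≠ 0 := fun h => hm (by simpa [h] using hf)
  have hpnot : p ∉ m.primeFactors := fun h => hpm (Nat.dvd_of_mem_primeFactors h)
  unfold BB
  rw [Nat.primeFactors_mul (pow_ne_zero n hp.ne_zero) hm,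
    Nat.primeFactors_prime_pow (by omega) hp, ← Finset.insert_eq,
    Finset.prod_insert hpnot]
  congr 1
  · rw [fact_self hp hm hpm, fact_self hp he0 hpe, fact_self hp hf0 hpf]
  · apply Finset.prod_congr rfl
    intro q hq
    have hqp : q ≠ p := fun h => hpnot (h ▸ hq)
    rw [fact_other hp hm hqp, fact_other hp he0 hqp, fact_other hp hf0 hqp]

lemma CC_step {p n m : ℕ} (hp : p.Prime) (hn : 1 ≤ n) (hm : m ≠ 0) (hpm : ¬ p ∣ m) :
    CC (p^n*m) = (((p:ℚ)+1)/((p:ℚ)-1))^(min 2 n) * CC m := by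
  have hpnot : p ∉ m.primeFactors := fun h => hpm (Nat.dvd_of_mem_primeFactors h)
  unfold CC
  rw [Nat.primeFactors_mul (pow_ne_zero n hp.ne_zero) hm,
    Nat.primeFactors_prime_pow (by omega) hp, ← Finset.insert_eq,
    Finset.prod_insert hpnot]
  congr 1
  · rw [fact_self hp hm hpm]
  · apply Finset.prod_congr rfl
    intro q hq
    have hqp : q ≠ p := fun h => hpnot (h ▸ hq)
    rw [fact_other hp hm hqp]

lemma sum_divisors_pp_mul {p n m : ℕ} (hp : p.Prime) (hm : m ≠ 0) (hpm : ¬ p ∣ m) (F : ℕ → ℚ) :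
    ∑ d ∈ (p^n*m).divisors, F d = ∑ j ∈ range (n+1), ∑ f ∈ m.divisors, F (p^j * f) := by
  rw [rw_sum_divisors_coprime_mul
    (Nat.Coprime.pow_left n ((hp.coprime_iff_not_dvd).2 hpm)) (pow_ne_zero n hp.ne_zero) hm,
    Nat.sum_divisors_prime_pow hp]

lemma BB_inv_global (N : ℕ) : N ≠ 0 → ∀ δ ∈ N.divisors, ∀ δ' ∈ N.divisors,
    ∑ d ∈ N.divisors, BB N δ d * (Nat.gcd d δ' : ℚ)^2 / (δ' : ℚ) =
      if δ = δ' then 1 else 0 := by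
  induction N using Nat.recOnPrimePow with
  | zero => intro h; exact absurd rfl h
  | one =>
    intro _ δ hδ δ' hδ'
    simp only [Nat.divisors_one, Finset.mem_singleton] at hδ hδ'
    subst hδ; subst hδ'
    simp [BB]
  | prime_pow_mul m p n hp hpm hn IH =>
    intro hN0 δ hδ δ' hδ'
    have hm : m ≠ 0 := by rintro rfl; simp at hN0
    rw [Nat.mem_divisors] at hδ hδ'
    obtain ⟨i, hi, e, he, rfl⟩ := exists_rep hp hpm hδ.1
    obtain ⟨i', hi', e', he', rfl⟩ := exists_rep hp hpm hδ'.1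
    have hpe : ¬ p ∣ e := fun h => hpm (h.trans he)
    have hpe' : ¬ p ∣ e' := fun h => hpm (h.trans he')
    have he0 : e ≠ 0 := fun h => hm (by simpa [h] using he)
    have he0' : e' ≠ 0 := fun h => hm (by simpa [h] using he')
    have hp0 : (p:ℚ) ≠ 0 := Nat.cast_ne_zero.2 hp.ne_zero
    rw [sum_divisors_pp_mul hp hm hpm]
    have hstep : ∀ j ∈ range (n+1), (∑ f ∈ m.divisors,
        BB (p^n*m) (p^i*e) (p^j*f) * (Nat.gcd (p^j*f) (p^i'*e') : ℚ)^2 / ((p^i'*e' : ℕ) : ℚ))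
        = ∑ f ∈ m.divisors, (bb p n i j * ((p:ℚ)^(2*min j i') / (p:ℚ)^i')) *
            (BB m e f * (Nat.gcd f e' : ℚ)^2 / (e' : ℚ)) := by
      intro j hj
      apply Finset.sum_congr rfl
      intro f hf
      rw [Nat.mem_divisors] at hf
      have hpf : ¬ p ∣ f := fun h => hpm (h.trans hf.1)
      rw [BB_step hp hn hm hpm he hf.1, gcd_split hp hpf hpe']
      have he0'' : ((e':ℕ):ℚ) ≠ 0 := Nat.cast_ne_zero.2 he0'
      push_cast
      field_simp
      ring
    rw [Finset.sum_congr rfl hstep, ← Finset.sum_mul_sum,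
      bb_inv hp.two_le hn hi hi', IH hm e (Nat.mem_divisors.2 ⟨he, hm⟩) e'
        (Nat.mem_divisors.2 ⟨he', hm⟩)]
    have hiff : (p^i*e = p^i'*e') ↔ (i = i' ∧ e = e') :=
      ⟨fun h => rep_inj hp hpe hpe' he0 h, by rintro ⟨rfl, rfl⟩; rfl⟩
    rw [if_congr hiff rfl rfl]
    by_cases h1 : i = i' <;> by_cases h2 : e = e' <;> simp [h1, h2]

lemma BB_col_global (N : ℕ) : N ≠ 0 → ∀ d ∈ N.divisors,
    (0 < ∑ δ ∈ N.divisors, BB N δ d) ∧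
    ∑ δ ∈ N.divisors, |BB N δ d| ≤ CC N * ∑ δ ∈ N.divisors, BB N δ d := by
  induction N using Nat.recOnPrimePow with
  | zero => intro h; exact absurd rfl h
  | one =>
    intro _ d hd
    simp only [Nat.divisors_one, Finset.mem_singleton] at hd
    subst hd
    simp [BB, CC]
  | prime_pow_mul m p n hp hpm hn IH =>
    intro hN0 d hd
    have hm : m ≠ 0 := by rintro rfl; simp at hN0
    rw [Nat.mem_divisors] at hd
    obtain ⟨j, hj, f, hf, rfl⟩ := exists_rep hp hpm hd.1
    have hq2 : (2:ℚ) ≤ (p:ℚ) := by exact_mod_cast hp.two_le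
    have hstep : ∀ i ∈ range (n+1), (∑ e ∈ m.divisors, BB (p^n*m) (p^i*e) (p^j*f))
        = ∑ e ∈ m.divisors, bb p n i j * BB m e f := by
      intro i hi
      apply Finset.sum_congr rfl
      intro e he
      exact BB_step hp hn hm hpm (Nat.mem_divisors.1 he).1 hf
    have hstepabs : ∀ i ∈ range (n+1), (∑ e ∈ m.divisors, |BB (p^n*m) (p^i*e) (p^j*f)|)
        = ∑ e ∈ m.divisors, |bb p n i j| * |BB m e f| := by
      intro i hi
      apply Finset.sum_congr rfl
      intro e he
      rw [BB_step hp hn hm hpm (Nat.mem_divisors.1 he).1 hf, abs_mul]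
    obtain ⟨hS1, hT1⟩ := bb_col (a := n) (j := j) hp.two_le hn hj
    obtain ⟨hS2, hT2⟩ := IH hm f (Nat.mem_divisors.2 ⟨hf, hm⟩)
    rw [sum_divisors_pp_mul hp hm hpm, Finset.sum_congr rfl hstep, ← Finset.sum_mul_sum]
    constructor
    · exact mul_pos hS1 hS2
    · rw [sum_divisors_pp_mul hp hm hpm, Finset.sum_congr rfl hstepabs, ← Finset.sum_mul_sum,
        CC_step hp hn hm hpm]
      have hT1' : (0:ℚ) ≤ ∑ i ∈ range (n+1), |bb p n i j| :=
        Finset.sum_nonneg (fun i _ => abs_nonneg _)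
      have hT2' : (0:ℚ) ≤ ∑ e ∈ m.divisors, |BB m e f| :=
        Finset.sum_nonneg (fun e _ => abs_nonneg _)
      calc (∑ i ∈ range (n+1), |bb p n i j|) * (∑ e ∈ m.divisors, |BB m e f|)
          ≤ ((((p:ℚ)+1)/((p:ℚ)-1))^(min 2 n) * ∑ i ∈ range (n+1), bb p n i j) *
            (CC m * ∑ e ∈ m.divisors, BB m e f) :=
            mul_le_mul hT1 hT2 hT2' (le_trans hT1' hT1)
        _ = (((p:ℚ)+1)/((p:ℚ)-1))^(min 2 n) * CC m *
            ((∑ i ∈ range (n+1), bb p n i j) * (∑ e ∈ m.divisors, BB m e f)) := by ring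

/-- Theorem 2 of Rouse–Webb: if the exponents `(r_δ)_{δ ∣ N}` of an eta-quotient
`f = ∏_{δ∣N} η(δz)^{r_δ} ∈ M_k(Γ₀(N))` (so `∑ r_δ = 2k` and the Ligozat order of
vanishing at every cusp `1/d`, `d ∣ N`, is non-negative), then
`∑ |r_δ| ≤ 2k ∏_{p∣N} ((p+1)/(p-1))^{min(2, ord_p(N))}`. -/
theorem eta_quotient_exponent_bound (N : ℕ) (hN : 0 < N) (k : ℕ) (hk : Even k)
    (hkpos : 0 < k) (r : ℕ → ℤ)
    (hweight : ∑ δ ∈ N.divisors, r δ = 2 * (k : ℤ))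
    (hligozat : ∀ d ∈ N.divisors, (0 : ℚ) ≤ ∑ δ ∈ N.divisors,
      (Nat.gcd d δ : ℚ) ^ 2 * (r δ : ℚ) /
        ((Nat.gcd d (N / d) : ℚ) * (d : ℚ) * (δ : ℚ))) :
    ((∑ δ ∈ N.divisors, |r δ| : ℤ) : ℚ) ≤ 2 * (k : ℚ) *
      ∏ p ∈ N.primeFactors,
        (((p : ℚ) + 1) / ((p : ℚ) - 1)) ^ (min 2 (N.factorization p)) := by
  have hN0 : N ≠ 0 := hN.ne'
  set L : ℕ → ℚ := fun d => ∑ δ ∈ N.divisors, (Nat.gcd d δ : ℚ)^2 * (r δ : ℚ) / (δ : ℚ)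
    with hLdef
  -- non-negativity of the (rescaled) orders of vanishing
  have hLpos : ∀ d ∈ N.divisors, 0 ≤ L d := by
    intro d hd
    have hd1 : 1 ≤ d := Nat.pos_of_mem_divisors hd
    have hg1 : 1 ≤ Nat.gcd d (N / d) := Nat.gcd_pos_of_pos_left _ hd1
    have hgd : (0:ℚ) < (Nat.gcd d (N / d) : ℚ) * (d : ℚ) := by
      have h1 : (0:ℚ) < (Nat.gcd d (N / d) : ℚ) := by exact_mod_cast hg1
      have h2 : (0:ℚ) < (d : ℚ) := by exact_mod_cast hd1
      exact mul_pos h1 h2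
    have hrw : ∑ δ ∈ N.divisors, (Nat.gcd d δ : ℚ) ^ 2 * (r δ : ℚ) /
        ((Nat.gcd d (N / d) : ℚ) * (d : ℚ) * (δ : ℚ)) =
        (1 / ((Nat.gcd d (N / d) : ℚ) * (d : ℚ))) * L d := by
      rw [hLdef, Finset.mul_sum]
      apply Finset.sum_congr rfl
      intro δ hδ
      field_simp
    have h0 := hligozat d hd
    rw [hrw] at h0
    have h1 : (0:ℚ) < 1 / ((Nat.gcd d (N / d) : ℚ) * (d : ℚ)) := by positivity
    by_contra hcon
    push_neg at hcon
    nlinarith [mul_pos h1 (neg_pos.2 hcon)]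
  -- inversion: recover r from the orders of vanishing
  have hrep : ∀ δ ∈ N.divisors, (r δ : ℚ) = ∑ d ∈ N.divisors, BB N δ d * L d := by
    intro δ hδ
    have : ∑ d ∈ N.divisors, BB N δ d * L d =
        ∑ δ' ∈ N.divisors, (r δ' : ℚ) *
          ∑ d ∈ N.divisors, BB N δ d * (Nat.gcd d δ' : ℚ)^2 / (δ' : ℚ) := by
      rw [hLdef]
      simp only [Finset.mul_sum]
      rw [Finset.sum_comm]
      apply Finset.sum_congr rfl
      intro δ' _
      apply Finset.sum_congr rfl
      intro d _
      ring
    rw [this]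
    have heval : ∀ δ' ∈ N.divisors, (r δ' : ℚ) *
        (∑ d ∈ N.divisors, BB N δ d * (Nat.gcd d δ' : ℚ)^2 / (δ' : ℚ)) =
        (r δ' : ℚ) * (if δ = δ' then 1 else 0) := by
      intro δ' hδ'
      rw [BB_inv_global N hN0 δ hδ δ' hδ']
    rw [Finset.sum_congr rfl heval]
    simp only [mul_ite, mul_one, mul_zero]
    rw [Finset.sum_ite_eq N.divisors δ (fun x => (r x : ℚ)), if_pos hδ]
  -- the main chain of inequalities
  have hCC : (∏ p ∈ N.primeFactors,
      (((p : ℚ) + 1) / ((p : ℚ) - 1)) ^ (min 2 (N.factorization p))) = CC N := rfl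
  rw [hCC]
  have hsum : ∑ δ ∈ N.divisors, ((r δ : ℤ) : ℚ) = 2 * (k : ℚ) := by
    exact_mod_cast congrArg (fun z : ℤ => (z : ℚ)) hweight
  have step1 : ((∑ δ ∈ N.divisors, |r δ| : ℤ) : ℚ) ≤
      ∑ δ ∈ N.divisors, ∑ d ∈ N.divisors, |BB N δ d| * L d := by
    push_cast
    apply Finset.sum_le_sum
    intro δ hδ
    calc |((r δ : ℤ) : ℚ)| = |∑ d ∈ N.divisors, BB N δ d * L d| := by rw [hrep δ hδ]
      _ ≤ ∑ d ∈ N.divisors, |BB N δ d * L d| := Finset.abs_sum_le_sum_abs _ _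
      _ = ∑ d ∈ N.divisors, |BB N δ d| * L d := by
          apply Finset.sum_congr rfl
          intro d hd
          rw [abs_mul, abs_of_nonneg (hLpos d hd)]
  have step2 : ∑ δ ∈ N.divisors, ∑ d ∈ N.divisors, |BB N δ d| * L d ≤
      CC N * ∑ δ ∈ N.divisors, ∑ d ∈ N.divisors, BB N δ d * L d := by
    calc ∑ δ ∈ N.divisors, ∑ d ∈ N.divisors, |BB N δ d| * L d
        = ∑ d ∈ N.divisors, ∑ δ ∈ N.divisors, |BB N δ d| * L d := Finset.sum_comm
      _ = ∑ d ∈ N.divisors, (∑ δ ∈ N.divisors, |BB N δ d|) * L d := by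
          apply Finset.sum_congr rfl
          intro d _
          rw [Finset.sum_mul]
      _ ≤ ∑ d ∈ N.divisors, (CC N * ∑ δ ∈ N.divisors, BB N δ d) * L d := by
          apply Finset.sum_le_sum
          intro d hd
          exact mul_le_mul_of_nonneg_right ((BB_col_global N hN0 d hd).2) (hLpos d hd)
      _ = CC N * ∑ d ∈ N.divisors, ∑ δ ∈ N.divisors, BB N δ d * L d := by
          rw [Finset.mul_sum]
          apply Finset.sum_congr rfl
          intro d _
          rw [mul_assoc, Finset.sum_mul]
      _ = CC N * ∑ δ ∈ N.divisors, ∑ d ∈ N.divisors, BB N δ d * L d := by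
          rw [Finset.sum_comm]
  have hfinal : ∑ δ ∈ N.divisors, ∑ d ∈ N.divisors, BB N δ d * L d = 2 * (k:ℚ) := by
    rw [← hsum]
    apply Finset.sum_congr rfl
    intro δ hδ
    exact (hrep δ hδ).symm
  calc ((∑ δ ∈ N.divisors, |r δ| : ℤ) : ℚ)
      ≤ ∑ δ ∈ N.divisors, ∑ d ∈ N.divisors, |BB N δ d| * L d := step1
    _ ≤ CC N * ∑ δ ∈ N.divisors, ∑ d ∈ N.divisors, BB N δ d * L d := step2
    _ = CC N * (2 * (k:ℚ)) := by rw [hfinal]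
    _ = 2 * (k:ℚ) * CC N := by ring
end
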